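/- Let F : 2^E → ℝ≥0 be monotone and submodular with F(∅) = 0, let e₁,…,e_a be the elements chosen by the greedy procedure in order, and let o₁,…,o_b be additional elements with b ≤ a such that there is an injective pairing σ assigning each o_j to a distinct e_{σ(j)} with the property that at the time e_{σ(j)} was chosen, o_j was still a candidate and thus the marginal gain of e_{σ(j)} was at least the marginal gain of o_j at that step. Then F({e₁,…,e_a} ∪ {o₁,…,o_b}) ≤ 2·F({e₁,…,e_a}). -/

import Mathlib

private lemma sum_image_le_aux {E ι : Type} [DecidableEq E] (s : Finset ι) (f : ι → E)
    (g : E → ℝ) (hg : ∀ x, 0 ≤ g x) :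
    ∑ x ∈ s.image f, g x ≤ ∑ i ∈ s, g (f i) := by
  classical
  induction s using Finset.induction_on with
  | empty => simp
  | @insert a s' h ih =>
    rw [Finset.image_insert, Finset.sum_insert h]
    by_cases hfa : f a ∈ s'.image f
    · rw [Finset.insert_eq_self.mpr hfa]
      linarith [hg (f a)]
    · rw [Finset.sum_insert hfa]
      linarith

private lemma marginal_subadd {E : Type} [DecidableEq E]
    (F : Finset E → ℝ)
    (hFsub : ∀ S T : Finset E, S ⊆ T → ∀ x : E,
      F (insert x T) - F T ≤ F (insert x S) - F S)
    (S : Finset E) (T : Finset E) :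
    F (S ∪ T) - F S ≤ ∑ x ∈ T, (F (insert x S) - F S) := by
  classical
  induction T using Finset.induction_on with
  | empty => simp
  | @insert x T' hx ih =>
    rw [Finset.sum_insert hx]
    have h1 : S ∪ insert x T' = insert x (S ∪ T') := by
      ext y; simp [Finset.mem_insert, Finset.mem_union]
    have h2 := hFsub S (S ∪ T') Finset.subset_union_left x
    rw [h1]
    linarith

/-- charging argument — if each extra element `o j` is injectively charged to a
greedy element whose marginal gain at its step dominates that of `o j`, then the combined set
has value at most twice the greedy value. -/
theorem stmt_17 {E : Type} [DecidableEq E]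
    (F : Finset E → ℝ) (hFnn : ∀ S, 0 ≤ F S) (hF0 : F ∅ = 0)
    (hFmono : ∀ S T : Finset E, S ⊆ T → F S ≤ F T)
    (hFsub : ∀ S T : Finset E, S ⊆ T → ∀ x : E,
      F (insert x T) - F T ≤ F (insert x S) - F S)
    (a b : ℕ) (e : Fin a → E) (o : Fin b → E)
    (hInjE : Function.Injective e)
    (σ : Fin b → Fin a) (hσ : Function.Injective σ)
    (pre : Fin a → Finset E)
    (hpre : ∀ i : Fin a, pre i = (Finset.univ.filter (fun t : Fin a => (t : ℕ) < (i : ℕ))).image e)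
    (hcand : ∀ j : Fin b, o j ∉ pre (σ j))
    (hgain : ∀ j : Fin b,
      F (insert (o j) (pre (σ j))) - F (pre (σ j)) ≤
        F (insert (e (σ j)) (pre (σ j))) - F (pre (σ j))) :
    F (Finset.univ.image e ∪ Finset.univ.image o) ≤ 2 * F (Finset.univ.image e) := by
  classical
  set G : Finset E := Finset.univ.image e with hG
  -- marginals of greedy elements
  set m : Fin a → ℝ := fun i => F (insert (e i) (pre i)) - F (pre i) with hm
  have hmnn : ∀ i, 0 ≤ m i := fun i => by
    have := hFmono (pre i) (insert (e i) (pre i)) (Finset.subset_insert _ _)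
    simp [hm]; linarith
  -- pre i ⊆ G
  have hpreG : ∀ i, pre i ⊆ G := by
    intro i
    rw [hpre i, hG]
    exact Finset.image_subset_image (Finset.filter_subset _ _)
  -- step 1: F(G ∪ O) - F(G) ≤ ∑ x in O, marginal wrt G
  have h1 := marginal_subadd F hFsub G (Finset.univ.image o)
  -- step 2: sum over image ≤ sum over j
  have h2 : ∑ x ∈ Finset.univ.image o, (F (insert x G) - F G)
      ≤ ∑ j : Fin b, (F (insert (o j) G) - F G) := by
    apply sum_image_le_aux
    intro x
    have := hFmono G (insert x G) (Finset.subset_insert _ _)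
    linarith
  -- step 3: each marginal wrt G ≤ marginal at step σ j ≤ m (σ j)
  have h3 : ∀ j : Fin b, F (insert (o j) G) - F G ≤ m (σ j) := by
    intro j
    have ha := hFsub (pre (σ j)) G (hpreG (σ j)) (o j)
    have hb := hgain j
    simp only [hm]
    linarith
  have h3' : ∑ j : Fin b, (F (insert (o j) G) - F G) ≤ ∑ j : Fin b, m (σ j) :=
    Finset.sum_le_sum fun j _ => h3 j
  -- step 4: ∑ j m (σ j) ≤ ∑ i m i
  have h4 : ∑ j : Fin b, m (σ j) ≤ ∑ i : Fin a, m i := by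
    rw [← Finset.sum_image (fun x _ y _ h => hσ h)]
    exact Finset.sum_le_sum_of_subset_of_nonneg (Finset.subset_univ _)
      (fun i _ _ => hmnn i)
  -- step 5: telescoping
  have h5 : ∑ i : Fin a, m i = F G := by
    set P : ℕ → Finset E := fun n =>
      (Finset.univ.filter (fun t : Fin a => (t : ℕ) < n)).image e with hP
    have hPsucc : ∀ i : Fin a, insert (e i) (P (i : ℕ)) = P ((i : ℕ) + 1) := by
      intro i
      have hf : (Finset.univ.filter (fun t : Fin a => (t : ℕ) < (i : ℕ) + 1))
          = insert i (Finset.univ.filter (fun t : Fin a => (t : ℕ) < (i : ℕ))) := by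
        ext t
        simp [Nat.lt_succ_iff_lt_or_eq, Fin.ext_iff, or_comm]
        rw [Fin.le_iff_val_le_val, Fin.lt_iff_val_lt_val]; omega
      simp only [hP]; rw [hf, Finset.image_insert]
    have hPa : P a = G := by
      have : (Finset.univ.filter (fun t : Fin a => (t : ℕ) < a)) = Finset.univ := by
        ext t; simp [t.isLt]
      simp [hP, this, hG]
    have hP0 : P 0 = ∅ := by simp [hP]
    have hsum : ∑ i : Fin a, m i = ∑ n ∈ Finset.range a, (F (P (n + 1)) - F (P n)) := by
      rw [Finset.sum_range fun n => F (P (n+1)) - F (P n)]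
      apply Finset.sum_congr rfl
      intro i _
      simp only [hm]
      rw [hpre i, ← hPsucc i]
    rw [hsum, Finset.sum_range_sub (fun n => F (P n)), hPa, hP0, hF0]
    ring
  have hfinal : F (G ∪ Finset.univ.image o) - F G ≤ F G := by
    calc F (G ∪ Finset.univ.image o) - F G
        ≤ ∑ x ∈ Finset.univ.image o, (F (insert x G) - F G) := h1
      _ ≤ ∑ j : Fin b, (F (insert (o j) G) - F G) := h2
      _ ≤ ∑ j : Fin b, m (σ j) := h3'
      _ ≤ ∑ i : Fin a, m i := h4
      _ = F G := h5
  linarith
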